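/- (Global estimate with borrowed Hardy term) For |a|<l, |a|l<r₊², α<9/4 and assuming (α ≤ 1) or (1<α≤2 and |a|<l/2), the inequality V₊(r) + V_α(r) + (1/(4l²))·Δ₋/(r²+a²) ≥ C·(Δ₋/(r²+a²)²)·r² holds for all r ≥ r₊ with C>0 depending only on M, l, a, α. -/

import Mathlib

/-- Δ₋(r) for the Kerr-AdS spacetime with parameters (M, a, l). -/
noncomputable def Dm (M l a r : ℝ) : ℝ := (r^2 + a^2) * (1 + r^2/l^2) - 2*M*r

/-- The potential component V₊. -/
noncomputable def Vplus (M l a r : ℝ) : ℝ :=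
  -(Dm M l a r)^2 * (3*r^2) / (r^2 + a^2)^4
    + Dm M l a r * (5*r^4/l^2 + 3*r^2*(1 + a^2/l^2) - 4*M*r + a^2) / (r^2 + a^2)^3

/-- The mass-term potential V_α, with Θ(α)=1 for α>0 and Θ(α)=0 for α≤0. -/
noncomputable def Valpha (M l a α r : ℝ) : ℝ :=
  -(α/l^2) * (Dm M l a r / (r^2 + a^2)^2) * (r^2 + (if 0 < α then 1 else 0) * a^2)

/-- Algebraic identity: the difference of the two sides of the estimate, with the
choice C = 1/(16 l²), equals Δ₋ · K / (l² (r²+a²)⁴) for an explicit polynomial K. -/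
lemma stmt12_ident (M l a α r : ℝ) (hl : l ≠ 0) (hx : r^2+a^2 ≠ 0) :
    Vplus M l a r + Valpha M l a α r + (1/(4*l^2))*(Dm M l a r/(r^2+a^2))
      - (1/(16*l^2)) * (Dm M l a r / (r^2+a^2)^2) * r^2
    = Dm M l a r * ((r^2+a^2)*(3*r^4+a^2*r^2+l^2*(r^2-a^2)) + (r^2+a^2)^3/4
        - α*(r^2+(if 0 < α then (1:ℝ) else 0)*a^2)*(r^2+a^2)^2
        - (r^2-2*a^2)*l^2*(Dm M l a r)
        - (1/16)*r^2*(r^2+a^2)^2) / (l^2 * (r^2+a^2)^4) := by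
  set θ : ℝ := if 0 < α then (1:ℝ) else 0 with hθ
  simp only [Vplus, Valpha, Dm, ← hθ]
  field_simp
  ring

set_option maxHeartbeats 1600000 in
/-- Nonnegativity of the polynomial factor K. -/
lemma stmt12_key (l a r d α θ : ℝ) (hl : 0 < l) (har : a^2 < r^2) (hr : 0 < r)
    (hd : 0 ≤ d) (hdu : l^2*d ≤ (r^2+a^2)*(l^2+r^2))
    (hcase : (α ≤ 0 ∧ θ = 0) ∨ (0 < α ∧ α ≤ 1 ∧ θ = 1)
       ∨ (1 < α ∧ α ≤ 2 ∧ θ = 1 ∧ 4*a^2 < l^2 ∧ 2*a^2 < r^2)) :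
    0 ≤ (r^2+a^2)*(3*r^4+a^2*r^2+l^2*(r^2-a^2)) + (r^2+a^2)^3/4
        - α*(r^2+θ*a^2)*(r^2+a^2)^2 - (r^2-2*a^2)*l^2*d
        - (1/16)*r^2*(r^2+a^2)^2 := by
  rcases hcase with ⟨h1, rfl⟩ | ⟨h1, h2, rfl⟩ | ⟨h1, h2, rfl, h3, h4⟩
  · rcases le_or_gt (2*a^2) (r^2) with h | h
    · nlinarith [sq_nonneg r, sq_nonneg a, mul_nonneg (sq_nonneg r) (sq_nonneg r),
        mul_nonneg hd (sq_nonneg a), sq_nonneg (r^2-a^2), sq_nonneg (r^2+a^2),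
        mul_nonneg (mul_nonneg (sub_nonneg.2 h) hl.le) hl.le,
        mul_nonneg (neg_nonneg.2 h1) (mul_pos (by positivity : (0:ℝ) < r^2)
          (by positivity : (0:ℝ) < (r^2+a^2)^2)).le]
    · nlinarith [mul_nonneg (mul_nonneg hd hl.le) hl.le, sq_nonneg (r^2-a^2),
        mul_nonneg (neg_nonneg.2 h1) (mul_pos (by positivity : (0:ℝ) < r^2)
          (by positivity : (0:ℝ) < (r^2+a^2)^2)).le,
        mul_nonneg (mul_nonneg (mul_nonneg hd hl.le) hl.le) (sub_nonneg.2 h.le)]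
  · rcases le_or_gt (2*a^2) (r^2) with h | h
    · have hA : (r^2-2*a^2)*(l^2*d) ≤ (r^2-2*a^2)*((r^2+a^2)*(l^2+r^2)) :=
        mul_le_mul_of_nonneg_left hdu (by linarith)
      have hB : α*(r^2+a^2)^3 ≤ (r^2+a^2)^3 := by
        nlinarith [pow_pos (by positivity : (0:ℝ) < r^2+a^2) 3]
      nlinarith [mul_nonneg (sq_nonneg a) (sub_pos.2 har).le,
        mul_nonneg (mul_nonneg (sq_nonneg a) (sub_pos.2 har).le)
          (by positivity : (0:ℝ) ≤ r^2+a^2),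
        mul_nonneg (sq_nonneg a) (by positivity : (0:ℝ) ≤ l^2*(r^2+a^2)),
        sq_nonneg (r^2-a^2), hr.le, sq_nonneg r, sq_nonneg a]
    · have hB : α*(r^2+a^2)^3 ≤ (r^2+a^2)^3 := by
        nlinarith [pow_pos (by positivity : (0:ℝ) < r^2+a^2) 3]
      nlinarith [mul_nonneg (mul_nonneg (mul_nonneg hd hl.le) hl.le)
          (by linarith : (0:ℝ) ≤ 2*a^2-r^2),
        mul_nonneg (sq_nonneg a) (sub_pos.2 har).le,
        mul_nonneg (mul_nonneg (sq_nonneg a) (sub_pos.2 har).le)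
          (by positivity : (0:ℝ) ≤ r^2+a^2),
        mul_nonneg (by positivity : (0:ℝ) ≤ l^2)
          (mul_nonneg (sub_pos.2 har).le (by positivity : (0:ℝ) ≤ r^2+a^2)),
        sq_nonneg (r^2-a^2), sq_nonneg r, sq_nonneg a]
  · have hA : (r^2-2*a^2)*(l^2*d) ≤ (r^2-2*a^2)*((r^2+a^2)*(l^2+r^2)) :=
      mul_le_mul_of_nonneg_left hdu (by linarith)
    have hB : α*(r^2+a^2)^3 ≤ 2*(r^2+a^2)^3 := by
      nlinarith [pow_pos (by positivity : (0:ℝ) < r^2+a^2) 3]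
    nlinarith [mul_nonneg (sq_nonneg (r^2-2*a^2)) (by positivity : (0:ℝ) ≤ r^2+a^2),
      mul_nonneg (mul_nonneg (sq_nonneg a) (sub_pos.2 h4).le)
        (by positivity : (0:ℝ) ≤ r^2+a^2),
      mul_nonneg (mul_nonneg (sq_nonneg a) (by linarith : (0:ℝ) ≤ l^2-4*a^2))
        (by positivity : (0:ℝ) ≤ r^2+a^2),
      mul_nonneg (sq_nonneg a) (sub_pos.2 h4).le, sq_nonneg (r^2-2*a^2),
      mul_nonneg (sq_nonneg a) (by linarith : (0:ℝ) ≤ l^2-4*a^2)]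

/-- global estimate with the borrowed Hardy term: under the
stated parameter restrictions,
V₊ + V_α + (1/(4l²)) Δ₋/(r²+a²) ≥ C (Δ₋/(r²+a²)²) r² for all r ≥ r₊. -/
theorem stmt_12 (M l a rp α : ℝ) (hM : 0 < M) (hl : 0 < l) (ha : |a| < l)
    (hHR : |a| * l < rp^2) (hrp : 0 < rp) (hα : α < 9/4)
    (hcase : α ≤ 1 ∨ (1 < α ∧ α ≤ 2 ∧ |a| < l/2))
    (hroot : Dm M l a rp = 0)
    (hΔ : ∀ r : ℝ, rp ≤ r → 0 ≤ Dm M l a r) :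
    ∃ C : ℝ, 0 < C ∧ ∀ r : ℝ, rp ≤ r →
      C * (Dm M l a r / (r^2 + a^2)^2) * r^2
        ≤ Vplus M l a r + Valpha M l a α r
          + (1/(4*l^2)) * (Dm M l a r / (r^2 + a^2)) := by
  refine ⟨1/(16*l^2), by positivity, fun r hr => ?_⟩
  have hr0 : 0 < r := lt_of_lt_of_le hrp hr
  have hrr : rp^2 ≤ r^2 := by nlinarith
  have har : a^2 < r^2 := by nlinarith [abs_nonneg a, sq_abs a]
  have hx : (0:ℝ) < r^2 + a^2 := by positivity
  have hD : 0 ≤ Dm M l a r := hΔ r hr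
  have hdu : l^2 * Dm M l a r ≤ (r^2+a^2)*(l^2+r^2) := by
    have h1 : l^2 * Dm M l a r = (r^2+a^2)*(l^2+r^2) - 2*M*l^2*r := by
      simp only [Dm]; field_simp
    nlinarith [mul_pos (mul_pos hM (by positivity : (0:ℝ) < l^2)) hr0]
  set θ : ℝ := if 0 < α then (1:ℝ) else 0 with hθ
  have hcase' : (α ≤ 0 ∧ θ = 0) ∨ (0 < α ∧ α ≤ 1 ∧ θ = 1)
      ∨ (1 < α ∧ α ≤ 2 ∧ θ = 1 ∧ 4*a^2 < l^2 ∧ 2*a^2 < r^2) := by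
    by_cases hpos : 0 < α
    · rcases hcase with h | ⟨h1, h2, h3⟩
      · exact Or.inr (Or.inl ⟨hpos, h, by simp [hθ, hpos]⟩)
      · refine Or.inr (Or.inr ⟨h1, h2, by simp [hθ, hpos], ?_, ?_⟩) <;>
          nlinarith [abs_nonneg a, sq_abs a]
    · exact Or.inl ⟨le_of_not_gt hpos, by simp [hθ, hpos]⟩
  have hK := stmt12_key l a r (Dm M l a r) α θ hl har hr0 hD hdu hcase'
  have hid := stmt12_ident M l a α r (ne_of_gt hl) (ne_of_gt hx)
  rw [← hθ] at hid
  have hnn : 0 ≤ Dm M l a r * ((r^2+a^2)*(3*r^4+a^2*r^2+l^2*(r^2-a^2)) + (r^2+a^2)^3/4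
        - α*(r^2+θ*a^2)*(r^2+a^2)^2
        - (r^2-2*a^2)*l^2*(Dm M l a r)
        - (1/16)*r^2*(r^2+a^2)^2) / (l^2 * (r^2+a^2)^4) :=
    div_nonneg (mul_nonneg hD hK) (by positivity)
  linarith [hid ▸ hnn]
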